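/- Fix W > 0, q ∈ (0,1), v₀ > W, α > 0. For z ∈ [0,1) let v(z) = v₀ + αz, S(z) = (v(z) - W)/(1-q) - zW/(1-z) when this is nonnegative (else the user does not participate and S = T = 0), and T(z) = 1/(1-q) + z/(1-z) when S(z) ≥ 0. Then the utility-maximizing z is z_S = max(0, 1 - sqrt(W(1-q)/α)), and the engagement-maximizing z is z_T = ((α - v₀ + Wq) + sqrt((α - v₀ + Wq)² - 4α(W - v₀)))/(2α), which satisfies S(z_T) = 0 and z_T ≥ z_S. -/

import Mathlib

open Set

set_option maxHeartbeats 1000000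

theorem stmt_1 (W q v₀ α : ℝ) (hW : 0 < W) (hq : q ∈ Ioo (0:ℝ) 1) (hv : W < v₀)
    (hα : 0 < α)
    (S T : ℝ → ℝ)
    (hS : ∀ z, S z = if 0 ≤ (v₀ + α * z - W) / (1 - q) - z * W / (1 - z)
      then (v₀ + α * z - W) / (1 - q) - z * W / (1 - z) else 0)
    (hT : ∀ z, T z = if 0 ≤ (v₀ + α * z - W) / (1 - q) - z * W / (1 - z)
      then 1 / (1 - q) + z / (1 - z) else 0)
    (zS zT : ℝ)
    (hzS : zS = max 0 (1 - Real.sqrt (W * (1 - q) / α)))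
    (hzT : zT = ((α - v₀ + W * q) +
      Real.sqrt ((α - v₀ + W * q) ^ 2 - 4 * α * (W - v₀))) / (2 * α)) :
    (∀ z ∈ Ico (0:ℝ) 1, S z ≤ S zS) ∧
    (∀ z ∈ Ico (0:ℝ) 1, T z ≤ T zT) ∧
    S zT = 0 ∧ zS ≤ zT := by
  obtain ⟨hq0, hq1⟩ := hq
  have h1q : (0:ℝ) < 1 - q := by linarith
  have hD : (0:ℝ) ≤ (α - v₀ + W * q) ^ 2 - 4 * α * (W - v₀) := by
    nlinarith [sq_nonneg (α - v₀ + W * q)]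
  set s := Real.sqrt ((α - v₀ + W * q) ^ 2 - 4 * α * (W - v₀)) with hsdef
  have hs0 : 0 ≤ s := Real.sqrt_nonneg _
  have hs2 : s ^ 2 = (α - v₀ + W * q) ^ 2 - 4 * α * (W - v₀) := Real.sq_sqrt hD
  set r := Real.sqrt (W * (1 - q) / α) with hrdef
  have hr0 : 0 < r := Real.sqrt_pos.mpr (by positivity)
  have hr2 : r ^ 2 = W * (1 - q) / α := Real.sq_sqrt (by positivity)
  have hr2' : α * r ^ 2 = W * (1 - q) := by rw [hr2]; field_simp
  have hzS0 : 0 ≤ zS := by rw [hzS]; exact le_max_left _ _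
  have hzS1 : zS < 1 := by rw [hzS]; apply max_lt <;> linarith
  have h2zT : 2 * α * zT = (α - v₀ + W * q) + s := by rw [hzT]; field_simp
  have hbs : 0 < (α - v₀ + W * q) + s := by
    nlinarith [hs0, hs2, sq_nonneg ((α - v₀ + W * q) + s), mul_pos hα (sub_pos.mpr hv)]
  have hzT0 : 0 < zT := by
    rw [hzT]; exact div_pos hbs (by linarith)
  have hK : 0 < α + v₀ - W * q := by nlinarith
  have hs2K : s ^ 2 < (α + v₀ - W * q) ^ 2 := by nlinarith [hs2, mul_pos hα hW, mul_pos (mul_pos hα hW) (sub_pos.mpr hq1)]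
  have hsK : s < α + v₀ - W * q := lt_of_pow_lt_pow_left₀ 2 hK.le hs2K
  have hzT1 : zT < 1 := by
    rw [hzT, div_lt_one (by linarith)]; linarith
  have h3 : s = 2 * α * zT - (α - v₀ + W * q) := by linarith
  have h4 : (2 * α * zT - (α - v₀ + W * q)) ^ 2
      = (α - v₀ + W * q) ^ 2 - 4 * α * (W - v₀) := by rw [← h3]; exact hs2
  have hquad : v₀ - W + (α - v₀ + W * q) * zT - α * zT ^ 2 = 0 := by
    have h5 : 4 * α * (v₀ - W + (α - v₀ + W * q) * zT - α * zT ^ 2) = 0 := by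
      linear_combination -h4
    have h6 : (4:ℝ) * α ≠ 0 := by positivity
    exact (mul_eq_zero.mp h5).resolve_left h6
  have key : ∀ z : ℝ, z < 1 →
      (v₀ + α * z - W) / (1 - q) - z * W / (1 - z)
        = (v₀ - W + (α - v₀ + W * q) * z - α * z ^ 2) / ((1 - q) * (1 - z)) := by
    intro z hz
    have h1z' : (0:ℝ) < 1 - z := by linarith
    have h1z : (1:ℝ) - z ≠ 0 := ne_of_gt h1z'
    field_simp
    ring
  have fzT : (v₀ + α * zT - W) / (1 - q) - zT * W / (1 - zT) = 0 := by
    rw [key zT hzT1, hquad, zero_div]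
  have le_zT : ∀ z : ℝ, 0 ≤ v₀ - W + (α - v₀ + W * q) * z - α * z ^ 2 → z ≤ zT := by
    intro z hP
    have ht2 : (2 * α * z - (α - v₀ + W * q)) ^ 2 ≤ s ^ 2 := by
      nlinarith [mul_nonneg hα.le hP, hs2]
    have hts : 2 * α * z - (α - v₀ + W * q) ≤ s := by nlinarith [ht2, hs0]
    have hmul : 2 * α * z ≤ 2 * α * zT := by linarith
    exact le_of_mul_le_mul_left hmul (by positivity)
  have Ppos : ∀ z : ℝ, 0 ≤ z → z < 1 →
      (v₀ - W + (α - v₀ + W * q) * z - α * z ^ 2) * (1 - zS)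
        ≤ (v₀ - W + (α - v₀ + W * q) * zS - α * zS ^ 2) * (1 - z) := by
    intro z hz0 hz1
    rcases le_or_gt r 1 with hc | hc
    · have hzSr : zS = 1 - r := by rw [hzS, max_eq_right]; linarith
      rw [hzSr]
      nlinarith [hr2', mul_nonneg (mul_nonneg hα.le hr0.le) (sq_nonneg (z - (1 - r)))]
    · have hzSr : zS = 0 := by rw [hzS, max_eq_left]; linarith
      rw [hzSr]
      have h1le : 1 ≤ r ^ 2 := by nlinarith
      nlinarith [hr2', mul_nonneg (mul_nonneg hα.le hz0) (sub_nonneg.mpr h1le),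
        mul_nonneg hα.le (mul_nonneg hz0 hz0)]
  have fmax : ∀ z : ℝ, 0 ≤ z → z < 1 →
      (v₀ + α * z - W) / (1 - q) - z * W / (1 - z)
        ≤ (v₀ + α * zS - W) / (1 - q) - zS * W / (1 - zS) := by
    intro z hz0 hz1
    rw [key z hz1, key zS hzS1]
    rw [div_le_div_iff₀ (mul_pos h1q (by linarith)) (mul_pos h1q (by linarith))]
    nlinarith [Ppos z hz0 hz1, h1q]
  have f0 : (v₀ + α * 0 - W) / (1 - q) - 0 * W / (1 - 0) = (v₀ - W) / (1 - q) := by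
    norm_num
  have fzS0 : 0 < (v₀ + α * zS - W) / (1 - q) - zS * W / (1 - zS) := by
    have h := fmax 0 le_rfl one_pos
    rw [f0] at h
    have : 0 < (v₀ - W) / (1 - q) := div_pos (by linarith) h1q
    linarith
  refine ⟨?_, ?_, ?_, ?_⟩
  · intro z hz
    rw [hS z, hS zS, if_pos fzS0.le]
    split_ifs with h
    · exact fmax z hz.1 hz.2
    · exact fzS0.le
  · intro z hz
    rw [hT z, hT zT, if_pos fzT.ge]
    split_ifs with h
    · have hd : (0:ℝ) < (1 - q) * (1 - z) := mul_pos h1q (by linarith [hz.2])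
      rw [key z hz.2] at h
      have h' := mul_nonneg h hd.le
      rw [div_mul_cancel₀ _ (ne_of_gt hd)] at h'
      have hzz : z ≤ zT := le_zT z h'
      exact add_le_add le_rfl (div_le_div₀ hzT0.le hzz (by linarith) (by linarith))
    · have h1 : 0 < zT / (1 - zT) := div_pos hzT0 (by linarith)
      have h2 : 0 < 1 / (1 - q) := by positivity
      linarith
  · rw [hS zT, if_pos fzT.ge, fzT]
  · have hd : (0:ℝ) < (1 - q) * (1 - zS) := mul_pos h1q (by linarith)
    rw [key zS hzS1] at fzS0
    have h' := mul_nonneg fzS0.le hd.le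
    rw [div_mul_cancel₀ _ (ne_of_gt hd)] at h'
    exact le_zT zS h'
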